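/- Let p be a prime and X_1, X_2 disjoint subsets of 𝔽_p with min{|X_1|, |X_2|} ≥ 3 and |X_1| + |X_2| ≤ p − 4. Suppose there are x_1, y_1, r ∈ 𝔽_p with X_1 = r[x_1, y_1], and |(X_1 − X_2) ∪ (X_2 − X_1)| ≤ |X_1| + |X_2| + 1. Then one of the following holds: (i) there are c, z, z' ∈ 𝔽_p such that X_2 = r([y_1+c, x_1−c] \ {z, z'}); (ii) there are x_2, y_2 ∈ 𝔽_p such that X_2 = r([x_2, y_2] ∪ [x_1+y_1−y_2, x_1+y_1−x_2]) and |X_1| = 3. -/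

import Mathlib

open scoped Pointwise

/-- The interval `[x,y]` in `ZMod p`: `{x, x+1, …, x+i}` where `i ∈ {0,…,p-1}`
reduces to `y - x` mod `p`. -/
def itv {p : ℕ} (x y : ZMod p) : Finset (ZMod p) :=
  (Finset.range ((y - x).val + 1)).image (fun i : ℕ => x + (i : ZMod p))

set_option linter.unusedSectionVars false
variable {p : ℕ} [NeZero p]

lemma mem_itv {x y t : ZMod p} : t ∈ itv x y ↔ (t - x).val ≤ (y - x).val := by
  simp only [itv, Finset.mem_image, Finset.mem_range, Nat.lt_succ_iff]
  constructor
  · rintro ⟨i, hi, rfl⟩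
    rwa [add_sub_cancel_left, ZMod.val_cast_of_lt (lt_of_le_of_lt hi (ZMod.val_lt _))]
  · intro h
    exact ⟨(t - x).val, h, by rw [ZMod.natCast_zmod_val, add_sub_cancel]⟩

lemma mem_itv' {x y t : ZMod p} : t ∈ itv x y ↔ ∃ i ≤ (y - x).val, t = x + (i : ZMod p) := by
  simp only [itv, Finset.mem_image, Finset.mem_range, Nat.lt_succ_iff]
  constructor
  · rintro ⟨i, hi, rfl⟩; exact ⟨i, hi, rfl⟩
  · rintro ⟨i, hi, rfl⟩; exact ⟨i, hi, rfl⟩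

lemma card_itv (x y : ZMod p) : (itv x y).card = (y - x).val + 1 := by
  rw [itv, Finset.card_image_of_injOn, Finset.card_range]
  intro i hi j hj hij
  simp only [Finset.coe_range, Set.mem_Iio, Nat.lt_succ_iff] at hi hj
  have hip : i < p := lt_of_le_of_lt hi (ZMod.val_lt _)
  have hjp : j < p := lt_of_le_of_lt hj (ZMod.val_lt _)
  have : (i : ZMod p) = j := by
    have := add_left_cancel hij
    exact this
  calc i = ((i : ZMod p)).val := (ZMod.val_cast_of_lt hip).symm
    _ = ((j : ZMod p)).val := by rw [this]
    _ = j := ZMod.val_cast_of_lt hjp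

/-- image of an ℕ-interval under `n ↦ z + n`. -/
lemma image_Icc_add (z : ZMod p) {a b : ℕ} (hab : a ≤ b) (hbp : b < p) :
    (Finset.Icc a b).image (fun n : ℕ => z + (n : ZMod p)) = itv (z + (a:ZMod p)) (z + (b:ZMod p)) := by
  have hval : ((z + (b:ZMod p)) - (z + (a:ZMod p))).val = b - a := by
    have : (z + (b:ZMod p)) - (z + (a:ZMod p)) = ((b - a : ℕ) : ZMod p) := by
      push_cast [Nat.cast_sub hab]; ring
    rw [this, ZMod.val_cast_of_lt (lt_of_le_of_lt (Nat.sub_le _ _) hbp)]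
  ext t
  simp only [Finset.mem_image, Finset.mem_Icc, mem_itv', hval]
  constructor
  · rintro ⟨n, ⟨h1, h2⟩, rfl⟩
    exact ⟨n - a, by omega, by push_cast [Nat.cast_sub h1]; ring⟩
  · rintro ⟨i, hi, rfl⟩
    exact ⟨a + i, by omega, by push_cast; ring⟩

/-- image of an ℕ-interval under `n ↦ z - n`. -/
lemma image_Icc_sub (z : ZMod p) {a b : ℕ} (hab : a ≤ b) (hbp : b < p) :
    (Finset.Icc a b).image (fun n : ℕ => z - (n : ZMod p)) = itv (z - (b:ZMod p)) (z - (a:ZMod p)) := by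
  have hval : ((z - (a:ZMod p)) - (z - (b:ZMod p))).val = b - a := by
    have : (z - (a:ZMod p)) - (z - (b:ZMod p)) = ((b - a : ℕ) : ZMod p) := by
      push_cast [Nat.cast_sub hab]; ring
    rw [this, ZMod.val_cast_of_lt (lt_of_le_of_lt (Nat.sub_le _ _) hbp)]
  ext t
  simp only [Finset.mem_image, Finset.mem_Icc, mem_itv', hval]
  constructor
  · rintro ⟨n, ⟨h1, h2⟩, rfl⟩
    exact ⟨b - n, by omega, by push_cast [Nat.cast_sub h2]; ring⟩
  · rintro ⟨i, hi, rfl⟩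
    exact ⟨b - i, by omega, by push_cast [Nat.cast_sub (show i ≤ b by omega)]; ring⟩

lemma neg_itv (x y : ZMod p) : -(itv x y) = itv (-y) (-x) := by
  have hn : (-x - -y).val = (y - x).val := by
    have : -x - -y = y - x := by ring
    rw [this]
  ext t
  simp only [Finset.mem_neg, mem_itv', hn]
  constructor
  · rintro ⟨s, ⟨i, hi, rfl⟩, rfl⟩
    refine ⟨(y - x).val - i, by omega, ?_⟩
    have : ((y - x).val : ZMod p) = y - x := ZMod.natCast_zmod_val _
    push_cast [Nat.cast_sub hi]
    rw [this]; ring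
  · rintro ⟨i, hi, rfl⟩
    refine ⟨x + (((y - x).val - i : ℕ) : ZMod p), ⟨_, by omega, rfl⟩, ?_⟩
    have : ((y - x).val : ZMod p) = y - x := ZMod.natCast_zmod_val _
    push_cast [Nat.cast_sub hi]
    rw [this]; ring

lemma itv_aux {a b g d : ZMod p} {f : ℕ}
    (hlen : (d - g).val = (b - a).val)
    (hlp : (b - a).val + 1 + f < p)
    (ht : (g - a).val ≤ (b - a).val)
    (hcard : ((itv a b) ∪ (itv g d)).card ≤ (b - a).val + 1 + f) :
    (g - a).val ≤ f := by
  set n := (b - a).val with hn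
  set t := (g - a).val with htdef
  by_contra hc
  push_neg at hc
  -- the elements g + j for j ∈ [n+1-t, n+1-t+f] lie in itv g d but not itv a b
  set S := (Finset.Icc (n + 1 - t) (n + 1 - t + f)).image (fun j : ℕ => g + (j : ZMod p)) with hS
  have hvals : ∀ j, n + 1 - t ≤ j → j ≤ n + 1 - t + f → ((g + (j : ZMod p)) - a).val = t + j := by
    intro j h1 h2
    have : (g + (j : ZMod p)) - a = ((t + j : ℕ) : ZMod p) := by
      push_cast
      have : ((t : ℕ) : ZMod p) = g - a := ZMod.natCast_zmod_val _
      rw [this]; ring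
    rw [this, ZMod.val_cast_of_lt (by omega)]
  have hSd : S ⊆ itv g d := by
    intro x hx
    rw [hS, Finset.mem_image] at hx
    obtain ⟨j, hj, rfl⟩ := hx
    rw [Finset.mem_Icc] at hj
    exact mem_itv'.2 ⟨j, by omega, rfl⟩
  have hSab : ∀ x ∈ S, x ∉ itv a b := by
    intro x hx
    rw [hS, Finset.mem_image] at hx
    obtain ⟨j, hj, rfl⟩ := hx
    rw [Finset.mem_Icc] at hj
    rw [mem_itv, hvals j hj.1 hj.2]
    omega
  have hScard : S.card = f + 1 := by
    rw [hS, Finset.card_image_of_injOn, Nat.card_Icc]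
    · omega
    · intro i hi j hj hij
      simp only [Finset.coe_Icc, Set.mem_Icc] at hi hj
      have h1 : ((g + (i:ZMod p)) - a).val = ((g + (j:ZMod p)) - a).val := by
        simpa using congrArg (fun x : ZMod p => (x - a).val) hij
      rw [hvals i hi.1 hi.2, hvals j hj.1 hj.2] at h1
      omega
  have hsub : itv a b ∪ S ⊆ itv a b ∪ itv g d := Finset.union_subset_union_right hSd
  have hdisj : Disjoint (itv a b) S := by
    rw [Finset.disjoint_right]
    exact hSab
  have := Finset.card_le_card hsub
  rw [Finset.card_union_of_disjoint hdisj, card_itv, hScard] at this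
  omega

lemma itv_shift {a b g d : ZMod p} {f : ℕ}
    (hlen : (d - g).val = (b - a).val)
    (hlp : (b - a).val + 1 + f < p)
    (hf : f + 1 ≤ (b - a).val + 1)
    (hcard : ((itv a b) ∪ (itv g d)).card ≤ (b - a).val + 1 + f) :
    (g - a).val ≤ f ∨ (a - g).val ≤ f := by
  set n := (b - a).val with hn
  have hinter : ¬ Disjoint (itv a b) (itv g d) := by
    intro hd
    have := Finset.card_le_card (Finset.Subset.refl ((itv a b) ∪ (itv g d)))
    rw [Finset.card_union_of_disjoint hd, card_itv, card_itv, hlen] at hcard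
    omega
  obtain ⟨z, hz1, hz2⟩ := Finset.not_disjoint_iff.1 hinter
  obtain ⟨i, hi, rfl⟩ := mem_itv'.1 hz1
  obtain ⟨j, hj, hgj⟩ := mem_itv'.1 hz2
  rw [hlen] at hj
  by_cases hij : j ≤ i
  · left
    have hga : g - a = ((i - j : ℕ) : ZMod p) := by
      have : g = a + (i:ZMod p) - (j:ZMod p) := by
        rw [hgj]; ring
      rw [this]
      push_cast [Nat.cast_sub hij]
      ring
    refine itv_aux hlen hlp ?_ hcard
    rw [hga, ZMod.val_cast_of_lt (by omega)]
    omega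
  · right
    have hag : a - g = ((j - i : ℕ) : ZMod p) := by
      have : a = g + (j:ZMod p) - (i:ZMod p) := by
        rw [← hgj]; ring
      rw [this]
      push_cast [Nat.cast_sub (by omega : i ≤ j)]
      ring
    have hcard' : ((itv g d) ∪ (itv a b)).card ≤ (d - g).val + 1 + f := by
      rw [Finset.union_comm, hlen]; exact hcard
    have := itv_aux (a := g) (b := d) (g := a) (d := b)
      (by rw [hlen]) (by rw [hlen]; exact hlp) ?_ hcard'
    · exact this
    · rw [hag, hlen, ZMod.val_cast_of_lt (by omega)]
      omega

lemma itv_central (a b : ZMod p) :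
    ∃ γ : ZMod p, γ ∈ itv a b ∧ 2 * γ + (((b - a).val % 2 : ℕ) : ZMod p) = a + b := by
  set n := (b - a).val with hn
  refine ⟨a + ((n / 2 : ℕ) : ZMod p), mem_itv'.2 ⟨n / 2, by omega, rfl⟩, ?_⟩
  have hb : b = a + (n : ℕ) := by
    rw [hn, ZMod.natCast_zmod_val]; ring
  rw [hb]
  have : ((n : ℕ) : ZMod p) = ((n / 2 : ℕ) : ZMod p) + ((n / 2 : ℕ) : ZMod p)
      + ((n % 2 : ℕ) : ZMod p) := by
    rw [← Nat.cast_add, ← Nat.cast_add]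
    congr 1
    omega
  rw [this]; ring

lemma pair_extract {α : Type*} [DecidableEq α] (J B : Finset α) (hBJ : B ⊆ J)
    (hc : (J \ B).card ≤ 2) (w : α) (hw : w ∉ J) :
    ∃ z z', B = J \ {z, z'} := by
  have hrec : J \ (J \ B) = B := by
    rw [sdiff_sdiff_right_self]
    exact Finset.inter_eq_right.2 hBJ
  interval_cases hcc : (J \ B).card
  · have he : J \ B = ∅ := Finset.card_eq_zero.1 hcc
    refine ⟨w, w, ?_⟩
    have : ({w, w} : Finset α) = {w} := by simp
    rw [this]
    have : J \ {w} = J := by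
      apply Finset.sdiff_eq_self_of_disjoint
      simp [hw]
    rw [this, ← hrec, he, Finset.sdiff_empty]
  · obtain ⟨z, hz⟩ := Finset.card_eq_one.1 hcc
    refine ⟨z, z, ?_⟩
    have : ({z, z} : Finset α) = {z} := by simp
    rw [this, ← hrec, hz]
  · obtain ⟨z, z', hzz, hz⟩ := Finset.card_eq_two.1 hcc
    exact ⟨z, z', by rw [← hrec, hz]⟩


lemma nat_struct (k : ℕ) (hk : 3 ≤ k) (BN : Finset ℕ) (u v : ℕ)
    (huB : u ∈ BN) (hvB : v ∈ BN) (hbounds : ∀ b ∈ BN, u ≤ b ∧ b ≤ v)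
    (hcard : (BN + Finset.range k).card ≤ BN.card + k + 1) :
    (v + 1 ≤ u + BN.card + 2 ∧ BN + Finset.range k = Finset.Icc u (v + k - 1)) ∨
    (k = 3 ∧ ∃ w w', u ≤ w ∧ w + 4 ≤ w' ∧ w' ≤ v ∧
      BN = Finset.Icc u w ∪ Finset.Icc w' v) := by
  set m := BN.card with hm
  set DN := BN + Finset.range k with hDN
  have huv : u ≤ v := (hbounds u huB).2
  have memDN : ∀ n, n ∈ DN ↔ ∃ b ∈ BN, ∃ i < k, b + i = n := by
    intro n
    simp only [hDN, Finset.mem_add, Finset.mem_range]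
  have hDsub : DN ⊆ Finset.Icc u (v + k - 1) := by
    intro n hn
    rw [memDN] at hn
    obtain ⟨b, hb, i, hi, rfl⟩ := hn
    have := hbounds b hb
    simp only [Finset.mem_Icc]; omega
  have hlow : ∀ i < k, u + i ∈ DN := fun i hi => (memDN _).2 ⟨u, huB, i, hi, rfl⟩
  have hhigh : ∀ i < k, v + i ∈ DN := fun i hi => (memDN _).2 ⟨v, hvB, i, hi, rfl⟩
  set M := Finset.Icc u (v + k - 1) \ DN with hM
  have hMcard : DN.card + M.card = v + k - u := by
    have h1 := Finset.card_sdiff_add_card_eq_card hDsub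
    rw [← hM, Nat.card_Icc] at h1
    omega
  have hBIcc : BN ⊆ Finset.Icc u v := by
    intro b hb; simp only [Finset.mem_Icc]; exact hbounds b hb
  have hmle : m ≤ v + 1 - u := by
    have := Finset.card_le_card hBIcc
    rwa [Nat.card_Icc] at this
  have hwin : ∀ x ∈ M, (u + k ≤ x ∧ x + 1 ≤ v ∧ ∀ i < k, x - i ∉ BN) := by
    intro x hx
    rw [hM, Finset.mem_sdiff, Finset.mem_Icc] at hx
    obtain ⟨⟨hx1, hx2⟩, hx3⟩ := hx
    have h1 : u + k ≤ x := by
      by_contra hc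
      exact hx3 ((memDN _).2 ⟨u, huB, x - u, by omega, by omega⟩)
    have h2 : x + 1 ≤ v := by
      by_contra hc
      exact hx3 ((memDN _).2 ⟨v, hvB, x - v, by omega, by omega⟩)
    refine ⟨h1, h2, fun i hi hmem => ?_⟩
    exact hx3 ((memDN _).2 ⟨x - i, hmem, i, hi, by omega⟩)
  rcases Finset.eq_empty_or_nonempty M with hMe | hMne
  · left
    have hfull : Finset.Icc u (v + k - 1) ⊆ DN := by
      rwa [hM, Finset.sdiff_eq_empty_iff_subset] at hMe
    have heq : DN = Finset.Icc u (v + k - 1) := Finset.Subset.antisymm hDsub hfull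
    have hc2 : DN.card = v + k - u := by rw [heq, Nat.card_Icc]; omega
    constructor
    · omega
    · exact heq
  · right
    set x₀ := M.min' hMne with hx₀
    set xM := M.max' hMne with hxM
    have hx₀M : x₀ ∈ M := M.min'_mem hMne
    have hxMM : xM ∈ M := M.max'_mem hMne
    obtain ⟨hx₀1, hx₀2, hx₀3⟩ := hwin _ hx₀M
    obtain ⟨hxM1, hxM2, hxM3⟩ := hwin _ hxMM
    set H := Finset.Icc u v \ BN with hH
    have hHcard : H.card + m = v + 1 - u := by
      have h1 := Finset.card_sdiff_add_card_eq_card hBIcc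
      rw [← hH, Nat.card_Icc] at h1
      omega
    have hMH : M ⊆ H := by
      intro x hx
      obtain ⟨h1, h2, h3⟩ := hwin x hx
      rw [hH, Finset.mem_sdiff, Finset.mem_Icc]
      exact ⟨⟨by omega, by omega⟩, by simpa using h3 0 (by omega)⟩
    have hHmem : ∀ y, u ≤ y → y ≤ v → y ∉ BN → y ∈ H := by
      intro y h1 h2 h3
      rw [hH, Finset.mem_sdiff, Finset.mem_Icc]; exact ⟨⟨h1, h2⟩, h3⟩
    have hextra : Finset.Icc (x₀ - (k - 1)) (x₀ - 1) ⊆ H \ M := by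
      intro y hy
      rw [Finset.mem_Icc] at hy
      rw [Finset.mem_sdiff]
      constructor
      · refine hHmem y (by omega) (by omega) ?_
        have := hx₀3 (x₀ - y) (by omega)
        rwa [show x₀ - (x₀ - y) = y by omega] at this
      · intro hyM
        have := M.min'_le y hyM
        omega
    have hdisjHM : M.card + (k - 1) ≤ H.card := by
      have hsub : M ∪ Finset.Icc (x₀ - (k - 1)) (x₀ - 1) ⊆ H := by
        intro y hy
        rcases Finset.mem_union.1 hy with h | h
        · exact hMH h
        · exact (Finset.mem_sdiff.1 (hextra h)).1
      have hdisj : Disjoint M (Finset.Icc (x₀ - (k - 1)) (x₀ - 1)) := by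
        rw [Finset.disjoint_right]
        intro y hy
        exact (Finset.mem_sdiff.1 (hextra hy)).2
      have := Finset.card_le_card hsub
      rw [Finset.card_union_of_disjoint hdisj, Nat.card_Icc] at this
      omega
    have hk3 : k = 3 := by omega
    subst hk3
    have hHP : H = insert (x₀ - 1) (insert (x₀ - 2) M) := by
      have hP1 : (x₀ - 1) ∉ insert (x₀ - 2) M := by
        simp only [Finset.mem_insert]
        push_neg
        refine ⟨by omega, fun hc => ?_⟩
        have := M.min'_le _ hc; omega
      have hP2 : (x₀ - 2) ∉ M := fun hc => by have := M.min'_le _ hc; omega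
      have hcardP : (insert (x₀ - 1) (insert (x₀ - 2) M)).card = M.card + 2 := by
        rw [Finset.card_insert_of_notMem hP1, Finset.card_insert_of_notMem hP2]
      have hPsub : insert (x₀ - 1) (insert (x₀ - 2) M) ⊆ H := by
        intro y hy
        simp only [Finset.mem_insert] at hy
        rcases hy with rfl | rfl | hy
        · have h12 := hextra (show x₀ - 1 ∈ Finset.Icc (x₀ - (3 - 1)) (x₀ - 1) by
            rw [Finset.mem_Icc]; omega)
          exact (Finset.mem_sdiff.1 h12).1
        · have h12 := hextra (show x₀ - 2 ∈ Finset.Icc (x₀ - (3 - 1)) (x₀ - 1) by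
            rw [Finset.mem_Icc]; omega)
          exact (Finset.mem_sdiff.1 h12).1
        · exact hMH hy
      have hHle : H.card ≤ M.card + 2 := by omega
      exact (Finset.eq_of_subset_of_card_le hPsub (by omega)).symm
    -- every point of [x₀-2, x] is a hole, for x ∈ M
    have claim : ∀ x, x ∈ M → ∀ y, x₀ - 2 ≤ y → y ≤ x → y ∈ H := by
      intro x
      induction x using Nat.strong_induction_on with
      | h x ih =>
        intro hx y hy1 hy2
        have hxx₀ : x₀ ≤ x := M.min'_le x hx
        obtain ⟨h1, h2, h3⟩ := hwin x hx
        by_cases hcase : x ≤ y + 2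
        · refine hHmem y (by omega) (by omega) ?_
          have := h3 (x - y) (by omega)
          rwa [show x - (x - y) = y by omega] at this
        · have hx1H : x - 1 ∈ H := by
            refine hHmem _ (by omega) (by omega) ?_
            have := h3 1 (by omega); exact this
          have hx1M : x - 1 ∈ M := by
            rw [hHP] at hx1H
            simp only [Finset.mem_insert] at hx1H
            rcases hx1H with hc | hc | hc
            · omega
            · omega
            · exact hc
          exact ih (x - 1) (by omega) hx1M y hy1 (by omega)
    have hx₀xM : x₀ ≤ xM := M.min'_le xM hxMM
    refine ⟨rfl, x₀ - 3, xM + 1, by omega, by omega, by omega, ?_⟩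
    ext n
    simp only [Finset.mem_union, Finset.mem_Icc]
    constructor
    · intro hn
      obtain ⟨hn1, hn2⟩ := hbounds n hn
      by_contra hc
      push_neg at hc
      have hrange : x₀ - 2 ≤ n ∧ n ≤ xM := by omega
      have := claim xM hxMM n hrange.1 hrange.2
      rw [hH, Finset.mem_sdiff] at this
      exact this.2 hn
    · intro hn
      by_contra hc
      have hnH : n ∈ H := by
        refine hHmem n (by omega) (by omega) hc
      rw [hHP] at hnH
      simp only [Finset.mem_insert] at hnH
      have hxMx₀ : x₀ ≤ xM := M.min'_le xM hxMM
      rcases hnH with rfl | rfl | hnM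
      · omega
      · omega
      · have h1 := M.min'_le n hnM
        have h2 := M.le_max' n hnM
        omega

lemma main_one {q : ℕ} [NeZero q] (hq : q.Prime) (A B : Finset (ZMod q)) (x₁ y₁ : ZMod q)
    (hA : A = itv x₁ y₁) (hdisj : Disjoint A B) (h₁ : 3 ≤ A.card) (h₂ : 3 ≤ B.card)
    (hsum : A.card + B.card ≤ q - 4)
    (h : ((A - B) ∪ (B - A)).card ≤ A.card + B.card + 1) :
    (∃ c z z' : ZMod q, B = itv (y₁ + c) (x₁ - c) \ {z, z'}) ∨
    (∃ x₂ y₂ : ZMod q, B = itv x₂ y₂ ∪ itv (x₁ + y₁ - y₂) (x₁ + y₁ - x₂) ∧ A.card = 3) := by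
  haveI : Fact q.Prime := ⟨hq⟩
  set k := A.card with hkdef
  set m := B.card with hmdef
  have hq0 : 0 < q := Nat.pos_of_ne_zero (NeZero.ne q)
  have hp10 : 10 ≤ q := by omega
  have hkm : k + m + 1 ≤ q - 3 := by omega
  have hkval : (y₁ - x₁).val + 1 = k := by rw [hkdef, hA, card_itv]
  set D := A - B with hD
  have hnegD : B - A = -D := by
    ext t
    simp only [Finset.mem_neg, Finset.mem_sub, hD]
    constructor
    · rintro ⟨b, hb, a, ha, rfl⟩
      exact ⟨a - b, ⟨a, ha, b, hb, rfl⟩, by ring⟩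
    · rintro ⟨s, ⟨a, ha, b, hb, rfl⟩, rfl⟩
      exact ⟨b, hb, a, ha, by ring⟩
  have hDcard : D.card ≤ k + m + 1 :=
    le_trans (Finset.card_le_card Finset.subset_union_left) h
  have hcompl : (Dᶜ).Nonempty := by
    rw [← Finset.card_pos, Finset.card_compl, ZMod.card]
    omega
  obtain ⟨c, hc⟩ := hcompl
  have hcD : c ∉ D := Finset.mem_compl.1 hc
  have hxA : ∀ i ≤ k - 1, x₁ + (i : ZMod q) ∈ A := by
    intro i hi
    rw [hA]
    exact mem_itv'.2 ⟨i, by omega, rfl⟩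
  have hinD : ∀ b ∈ B, ∀ i ≤ k - 1, x₁ + (i : ZMod q) - b ∈ D :=
    fun b hb i hi => Finset.sub_mem_sub (hxA i hi) hb
  have key : ∀ b ∈ B, 1 ≤ (x₁ - b - c).val ∧ (x₁ - b - c).val + (k - 1) ≤ q - 1 := by
    intro b hb
    constructor
    · by_contra hcon
      push_neg at hcon
      have h0 : (x₁ - b - c).val = 0 := by omega
      have : x₁ - b - c = 0 := by
        have := ZMod.natCast_zmod_val (x₁ - b - c)
        rw [h0] at this
        simpa using this.symm
      have hcd : c = x₁ + ((0:ℕ) : ZMod q) - b := by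
        push_cast
        linear_combination -this
      exact hcD (hcd ▸ hinD b hb 0 (by omega))
    · by_contra hcon
      push_neg at hcon
      set n := (x₁ - b - c).val with hn
      have hnlt : n < q := ZMod.val_lt _
      set i := q - n with hi
      have hik : i ≤ k - 1 := by omega
      have : x₁ + (i : ZMod q) - b = c := by
        have h1 : ((n:ℕ) : ZMod q) = x₁ - b - c := ZMod.natCast_zmod_val _
        have h2 : ((n:ℕ) : ZMod q) + ((i:ℕ) : ZMod q) = 0 := by
          rw [← Nat.cast_add, show n + i = q by omega, ZMod.natCast_self]
        linear_combination h2 - h1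
      exact hcD (this ▸ hinD b hb i hik)
  have hBne : B.Nonempty := Finset.card_pos.1 (by omega)
  set BN := B.image (fun b => (x₁ - b - c).val) with hBNdef
  have hBNne : BN.Nonempty := hBne.image _
  have hvalinj : ∀ b ∈ B, ∀ b' ∈ B,
      (x₁ - b - c).val = (x₁ - b' - c).val → b = b' := by
    intro b _ b' _ heq
    have h1 : (((x₁ - b - c).val : ℕ) : ZMod q) = (((x₁ - b' - c).val : ℕ) : ZMod q) := by
      rw [heq]
    rw [ZMod.natCast_zmod_val, ZMod.natCast_zmod_val] at h1
    linear_combination -h1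
  have hBNcard : BN.card = m := by
    rw [hBNdef, Finset.card_image_of_injOn]
    intro b hb b' hb' heq
    exact hvalinj b hb b' hb' heq
  have hgb : ∀ b ∈ B, x₁ - c - (((x₁ - b - c).val : ℕ) : ZMod q) = b := by
    intro b _
    rw [ZMod.natCast_zmod_val]
    ring
  have hBimg : B = BN.image (fun n : ℕ => x₁ - c - (n : ZMod q)) := by
    rw [hBNdef, Finset.image_image]
    ext t
    simp only [Finset.mem_image, Function.comp]
    constructor
    · intro ht
      exact ⟨t, ht, hgb t ht⟩
    · rintro ⟨b, hb, rfl⟩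
      rw [hgb b hb] at *
      exact hb
  set u := BN.min' hBNne with hu
  set v := BN.max' hBNne with hv
  have huB : u ∈ BN := BN.min'_mem hBNne
  have hvB : v ∈ BN := BN.max'_mem hBNne
  have hbounds : ∀ n ∈ BN, u ≤ n ∧ n ≤ v := fun n hn => ⟨BN.min'_le n hn, BN.le_max' n hn⟩
  have hrange : ∀ n ∈ BN, 1 ≤ n ∧ n + (k - 1) ≤ q - 1 := by
    intro n hn
    rw [hBNdef, Finset.mem_image] at hn
    obtain ⟨b, hb, rfl⟩ := hn
    exact key b hb
  have hu1 : 1 ≤ u := (hrange u huB).1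
  have hvq : v + (k - 1) ≤ q - 1 := (hrange v hvB).2
  have huv : u ≤ v := (hbounds v hvB).1
  set DN := BN + Finset.range k with hDNdef
  have hDimg : D = DN.image (fun n : ℕ => c + (n : ZMod q)) := by
    ext t
    simp only [Finset.mem_image, hD, Finset.mem_sub]
    constructor
    · rintro ⟨a, ha, b, hb, rfl⟩
      rw [hA] at ha
      obtain ⟨i, hi, rfl⟩ := mem_itv'.1 ha
      refine ⟨(x₁ - b - c).val + i, ?_, ?_⟩
      · rw [hDNdef, Finset.mem_add]
        exact ⟨(x₁ - b - c).val, Finset.mem_image_of_mem _ hb, i, Finset.mem_range.2 (by omega), rfl⟩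
      · have h1 := ZMod.natCast_zmod_val (x₁ - b - c)
        rw [Nat.cast_add, h1]
        ring
    · rintro ⟨n, hn, rfl⟩
      rw [hDNdef, Finset.mem_add] at hn
      obtain ⟨nb, hnb, i, hi, rfl⟩ := hn
      rw [hBNdef, Finset.mem_image] at hnb
      obtain ⟨b, hb, rfl⟩ := hnb
      rw [Finset.mem_range] at hi
      refine ⟨x₁ + (i : ZMod q), hxA i (by omega), b, hb, ?_⟩
      have h1 := ZMod.natCast_zmod_val (x₁ - b - c)
      rw [Nat.cast_add, h1]
      ring
  have hDNle : ∀ n ∈ DN, n ≤ q - 1 := by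
    intro n hn
    rw [hDNdef, Finset.mem_add] at hn
    obtain ⟨nb, hnb, i, hi, rfl⟩ := hn
    rw [Finset.mem_range] at hi
    have := (hrange nb hnb).2
    have := hbounds nb hnb
    omega
  have hcastinj : ∀ n n' : ℕ, n ≤ q - 1 → n' ≤ q - 1 → ((n:ℕ) : ZMod q) = ((n':ℕ) : ZMod q) → n = n' := by
    intro n n' hn hn' heq
    have h1 : ((n:ℕ) : ZMod q).val = n := ZMod.val_cast_of_lt (by omega)
    have h2 : ((n':ℕ) : ZMod q).val = n' := ZMod.val_cast_of_lt (by omega)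
    rw [← h1, ← h2, heq]
  have hDNcard : DN.card = D.card := by
    rw [hDimg, Finset.card_image_of_injOn]
    intro n hn n' hn' heq
    simp only at heq
    exact hcastinj n n' (hDNle n hn) (hDNle n' hn')
      (by have := add_left_cancel heq; exact_mod_cast this)
  have hns := nat_struct k h₁ BN u v huB hvB hbounds
    (by rw [← hDNdef, hDNcard, hBNcard]; omega)
  rcases hns with ⟨he, hfull⟩ | ⟨hk3, w, w', hw1, hw2, hw3, hBN⟩
  · -- Case (i): one interval
    left
    have hmv : m ≤ v + 1 - u := by
      have hsub : BN ⊆ Finset.Icc u v := by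
        intro n hn
        rw [Finset.mem_Icc]; exact hbounds n hn
      have := Finset.card_le_card hsub
      rw [Nat.card_Icc, hBNcard] at this
      omega
    set α := c + (u : ZMod q) with hα
    set β := c + ((v + k - 1 : ℕ) : ZMod q) with hβ
    have hDitv : D = itv α β := by
      rw [hDimg, hDNdef, hfull, image_Icc_add c (by omega) (by omega)]
    have hβα : (β - α).val = v + k - 1 - u := by
      have hd : β - α = ((v + k - 1 - u : ℕ) : ZMod q) := by
        rw [hβ, hα, Nat.cast_sub (show u ≤ v + k - 1 by omega)]
        ring
      rw [hd, ZMod.val_cast_of_lt (by omega)]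
    set f := u + m + 1 - v with hf
    have hDneg : itv (-β) (-α) = -D := by rw [← neg_itv, hDitv]
    have hcard2 : (D ∪ -D).card ≤ k + m + 1 := by
      rw [← hnegD]
      exact h
    have hshift := itv_shift (a := α) (b := β) (g := -β) (d := -α) (f := f)
      (by congr 1; ring)
      (by rw [hβα]; omega)
      (by rw [hβα]; omega)
      (by rw [hDneg, ← hDitv, hβα, show (v+k-1-u) + 1 + f = k + m + 1 by omega]; exact hcard2)
    set σ := α + β with hσ
    have hσval : σ = 2*c + (u : ZMod q) + (v : ZMod q) + ((k - 1 : ℕ) : ZMod q) := by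
      rw [hσ, hα, hβ, show (v + k - 1 : ℕ) = v + (k-1) by omega]
      push_cast
      ring
    -- extract i, j
    have hij : ∃ i j : ℕ, i + j ≤ f ∧ (i : ZMod q) - (j : ZMod q) = σ := by
      rcases hshift with h1 | h1
      · refine ⟨0, (-β - α).val, by omega, ?_⟩
        have := ZMod.natCast_zmod_val (-β - α)
        rw [this]
        rw [hσ]; ring
      · refine ⟨(α - -β).val, 0, by omega, ?_⟩
        have := ZMod.natCast_zmod_val (α - -β)
        rw [this]
        rw [hσ]; push_cast; ring
    obtain ⟨i, j, hijf, hijσ⟩ := hij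
    set L := x₁ - c - (v : ZMod q) - (j : ZMod q) with hL
    set R := x₁ - c - (u : ZMod q) + (i : ZMod q) with hR
    have hRL : (R - L).val = v - u + i + j := by
      have hd : R - L = ((v - u + i + j : ℕ) : ZMod q) := by
        rw [hR, hL, show (v - u + i + j : ℕ) = (v - u) + i + j from rfl,
          Nat.cast_add, Nat.cast_add, Nat.cast_sub huv]
        ring
      rw [hd, ZMod.val_cast_of_lt (by omega)]
    have hBJ : B ⊆ itv L R := by
      intro t ht
      rw [hBimg, Finset.mem_image] at ht
      obtain ⟨n, hn, rfl⟩ := ht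
      obtain ⟨hn1, hn2⟩ := hbounds n hn
      rw [mem_itv, hRL]
      have hd : x₁ - c - (n : ZMod q) - L = ((v + j - n : ℕ) : ZMod q) := by
        rw [hL, Nat.cast_sub (show n ≤ v + j by omega)]
        push_cast
        ring
      rw [hd, ZMod.val_cast_of_lt (by omega)]
      omega
    have hJcard : (itv L R).card = v - u + 1 + i + j := by
      rw [card_itv, hRL]; omega
    have hsd : ((itv L R) \ B).card ≤ 2 := by
      rw [Finset.card_sdiff_of_subset hBJ, hJcard, ← hmdef]
      omega
    have hJne : ((itv L R)ᶜ).Nonempty := by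
      rw [← Finset.card_pos, Finset.card_compl, ZMod.card, hJcard]
      omega
    obtain ⟨t₀, ht₀⟩ := hJne
    obtain ⟨z, z', hzz⟩ := pair_extract (itv L R) B hBJ hsd t₀ (Finset.mem_compl.1 ht₀)
    have hy₁ : y₁ = x₁ + ((k - 1 : ℕ) : ZMod q) := by
      have := ZMod.natCast_zmod_val (y₁ - x₁)
      rw [show (y₁ - x₁).val = k - 1 by omega] at this
      linear_combination -this
    have hcastv : ((v + k - 1 : ℕ) : ZMod q) = (v : ZMod q) + ((k - 1 : ℕ) : ZMod q) := by
      rw [show v + k - 1 = v + (k - 1) by omega, Nat.cast_add]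
    have hendsum : L + R = x₁ + y₁ := by
      rw [hy₁, hL, hR]
      linear_combination hijσ - hσval + 2 * hcastv
    refine ⟨L - y₁, z, z', ?_⟩
    have hL' : y₁ + (L - y₁) = L := by ring
    have hR' : x₁ - (L - y₁) = R := by linear_combination -hendsum
    rw [hL', hR']
    exact hzz
  · -- Case (ii): two intervals, k = 3
    have hk3' : k = 3 := hk3
    have hvq' : v + 2 ≤ q - 1 := by omega
    have hBNiff : ∀ n, n ∈ BN ↔ (u ≤ n ∧ n ≤ w ∨ w' ≤ n ∧ n ≤ v) := by
      intro n
      rw [hBN]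
      simp only [Finset.mem_union, Finset.mem_Icc]
    have hDNiff : ∀ n, n ∈ DN ↔ (u ≤ n ∧ n ≤ w + 2 ∨ w' ≤ n ∧ n ≤ v + 2) := by
      intro n
      rw [hDNdef, Finset.mem_add]
      constructor
      · rintro ⟨b, hb, i, hi, rfl⟩
        rw [hBNiff] at hb
        rw [Finset.mem_range, hk3'] at hi
        omega
      · intro hn
        rcases hn with ⟨h1, h2⟩ | ⟨h1, h2⟩
        · exact ⟨min n w, (hBNiff _).2 (Or.inl ⟨by omega, by omega⟩),
            n - min n w, Finset.mem_range.2 (by omega), by omega⟩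
        · exact ⟨min n v, (hBNiff _).2 (Or.inr ⟨by omega, by omega⟩),
            n - min n v, Finset.mem_range.2 (by omega), by omega⟩
    have hDNeq : DN = Finset.Icc u (w + 2) ∪ Finset.Icc w' (v + 2) := by
      ext n
      rw [hDNiff]
      simp only [Finset.mem_union, Finset.mem_Icc]
    have hIccdisj : Disjoint (Finset.Icc u w) (Finset.Icc w' v) := by
      rw [Finset.disjoint_left]
      intro n hn hn'
      rw [Finset.mem_Icc] at hn hn'
      omega
    have hm_split : m = (w - u + 1) + (v - w' + 1) := by
      rw [← hBNcard, hBN, Finset.card_union_of_disjoint hIccdisj, Nat.card_Icc, Nat.card_Icc]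
      omega
    have hDcard_eq : D.card = m + 4 := by
      rw [← hDNcard, hDNeq, Finset.card_union_of_disjoint
        (by rw [Finset.disjoint_left]; intro n hn hn';
            rw [Finset.mem_Icc] at hn hn'; omega),
        Nat.card_Icc, Nat.card_Icc]
      omega
    have hDeq : -D = D := by
      have hsub : D ⊆ D ∪ -D := Finset.subset_union_left
      have hle : (D ∪ -D).card ≤ D.card := by
        rw [hDcard_eq]
        calc (D ∪ -D).card ≤ k + m + 1 := by rw [← hnegD]; exact h
          _ = m + 4 := by omega
      have hUeq : D = D ∪ -D := Finset.eq_of_subset_of_card_le hsub hle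
      have hsub2 : -D ⊆ D := by
        have h2 := Finset.subset_union_right (s₁ := D) (s₂ := -D)
        rwa [← hUeq] at h2
      exact Finset.eq_of_subset_of_card_le hsub2 (by rw [Finset.card_neg])
    have hDmem : ∀ t, t ∈ D ↔ ∃ n : ℕ,
        (u ≤ n ∧ n ≤ w + 2 ∨ w' ≤ n ∧ n ≤ v + 2) ∧ t = c + (n : ZMod q) := by
      intro t
      rw [hDimg, Finset.mem_image]
      constructor
      · rintro ⟨n, hn, rfl⟩
        exact ⟨n, (hDNiff n).1 hn, rfl⟩
      · rintro ⟨n, hn, rfl⟩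
        exact ⟨n, (hDNiff n).2 hn, rfl⟩
    have hmemneg : ∀ t, t ∈ D → -t ∈ D := by
      intro t ht
      rw [← hDeq, Finset.mem_neg]
      exact ⟨t, ht, rfl⟩
    have hnotmem : ∀ nn : ℕ, nn ≤ q - 1 → ¬(u ≤ nn ∧ nn ≤ w + 2 ∨ w' ≤ nn ∧ nn ≤ v + 2) →
        c + (nn : ZMod q) ∉ D := by
      intro nn hnn hnr hmem
      rw [hDmem] at hmem
      obtain ⟨n, hn, heq⟩ := hmem
      have : (n : ZMod q) = (nn : ZMod q) := by
        have := add_left_cancel heq.symm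
        exact this
      have := hcastinj n nn (by omega) hnn this
      omega
    have hrend : ∀ n : ℕ, (u ≤ n ∧ n ≤ w + 2 ∨ w' ≤ n ∧ n ≤ v + 2) →
        c + (n : ZMod q) + 1 ∉ D → n = w + 2 ∨ n = v + 2 := by
      intro n hn hnot
      by_contra hcon
      push_neg at hcon
      apply hnot
      rw [hDmem]
      refine ⟨n + 1, by omega, by push_cast; ring⟩
    -- left endpoints of D must be negatives of right endpoints
    have humem : c + (u : ZMod q) ∈ D := (hDmem _).2 ⟨u, by omega, rfl⟩
    have hw'mem : c + (w' : ZMod q) ∈ D := (hDmem _).2 ⟨w', by omega, rfl⟩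
    have hnu : c + ((u - 1 : ℕ) : ZMod q) ∉ D := hnotmem (u - 1) (by omega) (by omega)
    have hnw' : c + ((w' - 1 : ℕ) : ZMod q) ∉ D := hnotmem (w' - 1) (by omega) (by omega)
    have hEnd : ∀ nn : ℕ, nn ≤ q - 1 → 1 ≤ nn → c + (nn : ZMod q) ∈ D →
        c + ((nn - 1 : ℕ) : ZMod q) ∉ D →
        (-(c + (nn : ZMod q)) = c + (w + 2 : ZMod q) ∨ -(c + (nn : ZMod q)) = c + (v + 2 : ZMod q)) := by
      intro nn h1 h2 hmem hnotm
      have hneg : -(c + (nn : ZMod q)) ∈ D := hmemneg _ hmem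
      obtain ⟨n₁, hn₁r, hn₁⟩ := (hDmem _).1 hneg
      have hnot1 : -(c + (nn : ZMod q)) + 1 ∉ D := by
        intro hmem1
        apply hnotm
        have := hmemneg _ hmem1
        have heq : -(-(c + (nn : ZMod q)) + 1) = c + ((nn - 1 : ℕ) : ZMod q) := by
          rw [Nat.cast_sub (show 1 ≤ nn by omega)]
          push_cast
          ring
        rwa [heq] at this
      rw [hn₁] at hnot1
      have := hrend n₁ hn₁r hnot1
      rcases this with rfl | rfl
      · left; rw [hn₁]; push_cast; ring
      · right; rw [hn₁]; push_cast; ring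
    have hEu := hEnd u (by omega) (by omega) humem hnu
    have hEw' := hEnd w' (by omega) (by omega) hw'mem hnw'
    have hne_uw' : (u : ZMod q) ≠ (w' : ZMod q) := by
      intro hcon
      have := hcastinj u w' (by omega) (by omega) hcon
      omega
    -- decompose B
    set z0 := x₁ - c with hz0
    have hBsplit : B = itv (z0 - (w : ZMod q)) (z0 - (u : ZMod q)) ∪
        itv (z0 - (v : ZMod q)) (z0 - (w' : ZMod q)) := by
      rw [hBimg, hBN, Finset.image_union,
        image_Icc_sub z0 hw1 (by omega), image_Icc_sub z0 hw3 (by omega)]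
    have hy₁ : y₁ = x₁ + 2 := by
      have := ZMod.natCast_zmod_val (y₁ - x₁)
      rw [show (y₁ - x₁).val = 2 by omega] at this
      push_cast at this
      linear_combination -this
    rcases hEu with hEu | hEu
    · -- -(c+u) = c+w+2 : symmetric case, contradiction
      exfalso
      have hEw'2 : -(c + (w' : ZMod q)) = c + (v + 2 : ZMod q) := by
        rcases hEw' with hEw' | hEw'
        · exfalso
          have : (u : ZMod q) = (w' : ZMod q) := by
            have h12 : -(c + (u : ZMod q)) = -(c + (w' : ZMod q)) := by rw [hEu, hEw']
            have := neg_injective h12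
            exact add_left_cancel this
          exact hne_uw' this
        · exact hEw'
      set a₁ := z0 - (w : ZMod q) with ha₁
      set b₁ := z0 - (u : ZMod q) with hb₁
      set a₂ := z0 - (v : ZMod q) with ha₂
      set b₂ := z0 - (w' : ZMod q) with hb₂
      have hn₁ : (b₁ - a₁).val = w - u := by
        have hd : b₁ - a₁ = ((w - u : ℕ) : ZMod q) := by
          rw [hb₁, ha₁, Nat.cast_sub hw1]; ring
        rw [hd, ZMod.val_cast_of_lt (by omega)]
      have hn₂ : (b₂ - a₂).val = v - w' := by
        have hd : b₂ - a₂ = ((v - w' : ℕ) : ZMod q) := by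
          rw [hb₂, ha₂, Nat.cast_sub hw3]; ring
        rw [hd, ZMod.val_cast_of_lt (by omega)]
      have hsum1 : a₁ + b₁ = x₁ + y₁ := by
        rw [ha₁, hb₁, hz0, hy₁]
        linear_combination hEu
      have hsum2 : a₂ + b₂ = x₁ + y₁ := by
        rw [ha₂, hb₂, hz0, hy₁]
        linear_combination hEw'2
      have hsumA : x₁ + y₁ = x₁ + y₁ := rfl
      obtain ⟨γA, hγA, hγAs⟩ := itv_central x₁ y₁
      obtain ⟨γ₁, hγ₁, hγ₁s⟩ := itv_central a₁ b₁
      obtain ⟨γ₂, hγ₂, hγ₂s⟩ := itv_central a₂ b₂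
      rw [show (y₁ - x₁).val = 2 by omega] at hγAs
      norm_num at hγAs
      rw [hn₁, hsum1] at hγ₁s
      rw [hn₂, hsum2] at hγ₂s
      have two_ne : (2 : ZMod q) ≠ 0 := by
        intro hcon
        have : ((2 : ℕ) : ZMod q) = 0 := by push_cast; exact hcon
        rw [ZMod.natCast_eq_zero_iff] at this
        have := Nat.le_of_dvd (by norm_num) this
        omega
      have hcancel : ∀ γ γ' : ZMod q, 2 * γ = 2 * γ' → γ = γ' := by
        intro γ γ' hγγ
        exact mul_left_cancel₀ two_ne hγγ
      have hAmem : ∀ t, t ∈ itv x₁ y₁ → t ∈ A := fun t ht => hA ▸ ht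
      have hB1B : ∀ t, t ∈ itv a₁ b₁ → t ∈ B := by
        intro t ht
        rw [hBsplit]
        exact Finset.mem_union_left _ ht
      have hB2B : ∀ t, t ∈ itv a₂ b₂ → t ∈ B := by
        intro t ht
        rw [hBsplit]
        exact Finset.mem_union_right _ ht
      have hB1B2 : ∀ t, t ∈ itv a₁ b₁ → t ∈ itv a₂ b₂ → False := by
        intro t ht1 ht2
        obtain ⟨i1, hi1, rfl⟩ := mem_itv'.1 ht1
        obtain ⟨i2, hi2, heq2⟩ := mem_itv'.1 ht2
        rw [hn₁] at hi1
        rw [hn₂] at hi2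
        have : ((w - i1 : ℕ) : ZMod q) = ((v - i2 : ℕ) : ZMod q) := by
          rw [Nat.cast_sub (show i1 ≤ w by omega), Nat.cast_sub (show i2 ≤ v by omega)]
          rw [ha₁, hz0] at heq2
          rw [ha₂, hz0] at heq2
          linear_combination -heq2
        have := hcastinj _ _ (by omega) (by omega) this
        omega
      rcases Nat.even_or_odd (w - u) with hpar1 | hpar1
      · have : (w - u) % 2 = 0 := Nat.even_iff.1 hpar1
        rw [this] at hγ₁s
        push_cast at hγ₁s
        have : γ₁ = γA := hcancel _ _ (by linear_combination hγ₁s - hγAs)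
        exact Finset.disjoint_left.1 hdisj (hAmem γA hγA) (this ▸ hB1B _ hγ₁)
      · rcases Nat.even_or_odd (v - w') with hpar2 | hpar2
        · have : (v - w') % 2 = 0 := Nat.even_iff.1 hpar2
          rw [this] at hγ₂s
          push_cast at hγ₂s
          have : γ₂ = γA := hcancel _ _ (by linear_combination hγ₂s - hγAs)
          exact Finset.disjoint_left.1 hdisj (hAmem γA hγA) (this ▸ hB2B _ hγ₂)
        · have e1 : (w - u) % 2 = 1 := Nat.odd_iff.1 hpar1
          have e2 : (v - w') % 2 = 1 := Nat.odd_iff.1 hpar2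
          rw [e1] at hγ₁s
          rw [e2] at hγ₂s
          have : γ₁ = γ₂ := hcancel _ _ (by linear_combination hγ₁s - hγ₂s)
          exact hB1B2 γ₁ hγ₁ (this ▸ hγ₂)
    · -- -(c+u) = c+v+2 : conclusion (ii)
      right
      have hEw'2 : -(c + (w' : ZMod q)) = c + (w + 2 : ZMod q) := by
        rcases hEw' with hEw' | hEw'
        · exact hEw'
        · exfalso
          have : (u : ZMod q) = (w' : ZMod q) := by
            have h12 : -(c + (u : ZMod q)) = -(c + (w' : ZMod q)) := by rw [hEu, hEw']
            have := neg_injective h12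
            exact add_left_cancel this
          exact hne_uw' this
      refine ⟨x₁ - c - (v : ZMod q), x₁ - c - (w' : ZMod q), ?_, by omega⟩
      have e1 : x₁ + y₁ - (x₁ - c - (w' : ZMod q)) = (x₁ - c) - (w : ZMod q) := by
        rw [hy₁]
        linear_combination -hEw'2
      have e2 : x₁ + y₁ - (x₁ - c - (v : ZMod q)) = (x₁ - c) - (u : ZMod q) := by
        rw [hy₁]
        linear_combination -hEu
      rw [e1, e2, hBsplit, Finset.union_comm]

theorem stmt_12 (p : ℕ) (hp : p.Prime) (X₁ X₂ : Finset (ZMod p))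
    (hdisj : Disjoint X₁ X₂) (h₁ : 3 ≤ X₁.card) (h₂ : 3 ≤ X₂.card)
    (hsum : X₁.card + X₂.card ≤ p - 4)
    (x₁ y₁ r : ZMod p) (hX₁ : X₁ = r • itv x₁ y₁)
    (h : ((X₁ - X₂) ∪ (X₂ - X₁)).card ≤ X₁.card + X₂.card + 1) :
    (∃ c z z' : ZMod p, X₂ = r • (itv (y₁ + c) (x₁ - c) \ {z, z'})) ∨
    (∃ x₂ y₂ : ZMod p,
      X₂ = r • (itv x₂ y₂ ∪ itv (x₁ + y₁ - y₂) (x₁ + y₁ - x₂)) ∧ X₁.card = 3) := by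
  haveI : Fact p.Prime := ⟨hp⟩
  haveI : NeZero p := ⟨hp.ne_zero⟩
  have hr : r ≠ 0 := by
    intro hr0
    have hsub : X₁ ⊆ {0} := by
      rw [hX₁, hr0]
      intro t ht
      rw [Finset.mem_smul_finset] at ht
      obtain ⟨y, _, rfl⟩ := ht
      simp
    have := Finset.card_le_card hsub
    simp at this
    omega
  set A := itv x₁ y₁ with hAdef
  set B := X₂.image (fun t => r⁻¹ * t) with hBdef
  have hX₂B : X₂ = r • B := by
    rw [hBdef, Finset.smul_finset_def, Finset.image_image]
    ext t
    simp only [Finset.mem_image, Function.comp]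
    constructor
    · intro ht
      exact ⟨t, ht, by simp [smul_eq_mul, hr]⟩
    · rintro ⟨s, hs, rfl⟩
      have : r • (r⁻¹ * s) = s := by simp [smul_eq_mul, hr]
      rw [this]
      exact hs
  have hrinj : Function.Injective (fun t : ZMod p => r • t) :=
    fun a b hab => mul_left_cancel₀ hr hab
  have hAcard : A.card = X₁.card := by
    rw [hX₁, Finset.smul_finset_def]
    rw [Finset.card_image_of_injective _ hrinj]
  have hBcard : B.card = X₂.card := by
    rw [hBdef]
    apply Finset.card_image_of_injective
    intro a b hab
    simpa using mul_left_cancel₀ (inv_ne_zero hr) hab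
  have hsmulmem : ∀ (S : Finset (ZMod p)) (t : ZMod p), t ∈ r • S ↔ ∃ s ∈ S, r * s = t := by
    intro S t
    rw [Finset.mem_smul_finset]
    simp only [smul_eq_mul]
  have hdisjAB : Disjoint A B := by
    rw [Finset.disjoint_left]
    intro t htA htB
    have h1 : r * t ∈ X₁ := by
      rw [hX₁]
      exact (hsmulmem _ _).2 ⟨t, htA, rfl⟩
    have h2 : r * t ∈ X₂ := by
      rw [hBdef, Finset.mem_image] at htB
      obtain ⟨s, hs, rfl⟩ := htB
      have : r * (r⁻¹ * s) = s := by field_simp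
      rwa [this]
    exact Finset.disjoint_left.1 hdisj h1 h2
  have hsub1 : X₁ - X₂ = r • (A - B) := by
    ext t
    rw [hsmulmem]
    simp only [Finset.mem_sub]
    constructor
    · rintro ⟨a, ha, b, hb, rfl⟩
      rw [hX₁] at ha
      obtain ⟨a', ha', rfl⟩ := (hsmulmem _ _).1 ha
      refine ⟨a' - r⁻¹ * b, ⟨a', ha', r⁻¹ * b, ?_, rfl⟩, by field_simp <;> ring⟩
      rw [hBdef]
      exact Finset.mem_image_of_mem _ hb
    · rintro ⟨s, ⟨a, ha, b, hb, rfl⟩, rfl⟩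
      rw [hBdef, Finset.mem_image] at hb
      obtain ⟨b', hb', rfl⟩ := hb
      refine ⟨r * a, ?_, b', hb', by field_simp <;> ring⟩
      rw [hX₁]
      exact (hsmulmem _ _).2 ⟨a, ha, rfl⟩
  have hsub2 : X₂ - X₁ = r • (B - A) := by
    ext t
    rw [hsmulmem]
    simp only [Finset.mem_sub]
    constructor
    · rintro ⟨b, hb, a, ha, rfl⟩
      rw [hX₁] at ha
      obtain ⟨a', ha', rfl⟩ := (hsmulmem _ _).1 ha
      refine ⟨r⁻¹ * b - a', ⟨r⁻¹ * b, ?_, a', ha', rfl⟩, by field_simp <;> ring⟩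
      rw [hBdef]
      exact Finset.mem_image_of_mem _ hb
    · rintro ⟨s, ⟨b, hb, a, ha, rfl⟩, rfl⟩
      rw [hBdef, Finset.mem_image] at hb
      obtain ⟨b', hb', rfl⟩ := hb
      refine ⟨b', hb', r * a, ?_, by field_simp <;> ring⟩
      rw [hX₁]
      exact (hsmulmem _ _).2 ⟨a, ha, rfl⟩
  have hucard : ((A - B) ∪ (B - A)).card = ((X₁ - X₂) ∪ (X₂ - X₁)).card := by
    rw [hsub1, hsub2, ← Finset.smul_finset_union,
      Finset.smul_finset_def, Finset.card_image_of_injective _ hrinj]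
  have hmain := main_one hp A B x₁ y₁ rfl hdisjAB (by omega) (by omega) (by omega)
    (by rw [hucard, hAcard, hBcard]; exact h)
  rcases hmain with ⟨c, z, z', hB⟩ | ⟨x₂, y₂, hB, hA3⟩
  · left
    exact ⟨c, z, z', by rw [hX₂B, hB]⟩
  · right
    exact ⟨x₂, y₂, by rw [hX₂B, hB], by omega⟩
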